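/- For every integer n ≥ 3, the system λ(n-2)(3n²-n-2+c(n+2)) = (n-1)(n+1) together with 4λ(c+7)(2c-1) + (c-2)(c+4) = 0 has exactly three solutions (c,λ) in ℂ²: (2(n-1)/(n+2), (n+1)/((n-2)(3n+4))), (-2(2n-1)/(n-2), (n-1)/((n-4)(3n-2))), and (-(3n+1), -(n-1)(n+1)/(4(n-2)(2n+1))), where in the second point one assumes n ≠ 4. -/

import Mathlib

/-- For `n ≥ 3`, `n ≠ 4`: the truncation curves of `W^k(sl_n, f_prin)` and of the
parafermion algebra `N^k(sl_2)` intersect in exactly the three displayed points. -/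
theorem stmt7 (n : ℕ) (hn : 3 ≤ n) (hn4 : n ≠ 4) (c l : ℂ) :
    (l*((n:ℂ)-2)*(3*(n:ℂ)^2-n-2+c*((n:ℂ)+2)) = ((n:ℂ)-1)*((n:ℂ)+1) ∧
     4*l*(c+7)*(2*c-1) + (c-2)*(c+4) = 0) ↔
    ((c = 2*((n:ℂ)-1)/((n:ℂ)+2) ∧ l = ((n:ℂ)+1)/(((n:ℂ)-2)*(3*(n:ℂ)+4))) ∨
     (c = -(2*(2*(n:ℂ)-1))/((n:ℂ)-2) ∧ l = ((n:ℂ)-1)/(((n:ℂ)-4)*(3*(n:ℂ)-2))) ∨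
     (c = -(3*(n:ℂ)+1) ∧ l = -(((n:ℂ)-1)*((n:ℂ)+1))/(4*((n:ℂ)-2)*(2*(n:ℂ)+1)))) := by
  have h2 : (n:ℂ) - 2 ≠ 0 := sub_ne_zero.mpr (by exact_mod_cast (by omega : n ≠ 2))
  have h4 : (n:ℂ) - 4 ≠ 0 := sub_ne_zero.mpr (by exact_mod_cast hn4)
  have h1 : (n:ℂ) - 1 ≠ 0 := sub_ne_zero.mpr (by exact_mod_cast (by omega : n ≠ 1))
  have hp1 : (n:ℂ) + 1 ≠ 0 := by
    intro h
    have h' : ((n+1:ℕ):ℂ) = 0 := by push_cast; linear_combination h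
    exact (Nat.cast_ne_zero.mpr (by omega : n + 1 ≠ 0)) h'
  have hp2 : (n:ℂ) + 2 ≠ 0 := by
    intro h
    have h' : ((n+2:ℕ):ℂ) = 0 := by push_cast; linear_combination h
    exact (Nat.cast_ne_zero.mpr (by omega : n + 2 ≠ 0)) h'
  have h34 : 3*(n:ℂ) + 4 ≠ 0 := by
    intro h
    have h' : ((3*n+4:ℕ):ℂ) = 0 := by push_cast; linear_combination h
    exact (Nat.cast_ne_zero.mpr (by omega : 3*n + 4 ≠ 0)) h'
  have h32 : 3*(n:ℂ) - 2 ≠ 0 := by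
    intro h
    have h' : ((3*n:ℕ):ℂ) = ((2:ℕ):ℂ) := by push_cast; linear_combination h
    have : 3*n = 2 := by exact_mod_cast h'
    omega
  have h21 : 2*(n:ℂ) + 1 ≠ 0 := by
    intro h
    have h' : ((2*n+1:ℕ):ℂ) = 0 := by push_cast; linear_combination h
    exact (Nat.cast_ne_zero.mpr (by omega : 2*n + 1 ≠ 0)) h'
  constructor
  · rintro ⟨e1, e2⟩
    have key : (((n:ℂ)+2)*c - 2*((n:ℂ)-1)) * ((((n:ℂ)-2)*c + 2*(2*(n:ℂ)-1)) * (c + 3*(n:ℂ)+1)) = 0 := by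
      linear_combination (((n:ℂ)-2)*(3*(n:ℂ)^2-(n:ℂ)-2+c*((n:ℂ)+2))) * e2 - (4*(c+7)*(2*c-1)) * e1
    rcases mul_eq_zero.mp key with hf | key
    · left
      have hc : c = 2*((n:ℂ)-1)/((n:ℂ)+2) := by
        field_simp
        linear_combination hf
      subst hc
      refine ⟨rfl, ?_⟩
      rw [eq_div_iff (mul_ne_zero h2 h34)]
      field_simp at e1
      have h := mul_right_cancel₀ h1
        (show l * (((n:ℂ)-2)*(3*(n:ℂ)+4)) * ((n:ℂ)-1) = ((n:ℂ)+1) * ((n:ℂ)-1) from by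
          linear_combination e1)
      linear_combination h
    · rcases mul_eq_zero.mp key with hf | hf
      · right; left
        have hc : c = -(2*(2*(n:ℂ)-1))/((n:ℂ)-2) := by
          field_simp
          linear_combination hf
        subst hc
        refine ⟨rfl, ?_⟩
        rw [eq_div_iff (mul_ne_zero h4 h32)]
        field_simp at e1
        have h := mul_right_cancel₀ (mul_ne_zero h2 hp1)
          (show l * (((n:ℂ)-4)*(3*(n:ℂ)-2)) * (((n:ℂ)-2)*((n:ℂ)+1))
              = ((n:ℂ)-1) * (((n:ℂ)-2)*((n:ℂ)+1)) from by linear_combination ((n:ℂ)-2) * e1)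
        linear_combination h
      · right; right
        have hc : c = -(3*(n:ℂ)+1) := by linear_combination hf
        subst hc
        refine ⟨rfl, ?_⟩
        rw [eq_div_iff (mul_ne_zero (mul_ne_zero (by norm_num) h2) h21)]
        linear_combination -e1
  · rintro (⟨hc, hl⟩ | ⟨hc, hl⟩ | ⟨hc, hl⟩) <;> subst hc <;> subst hl <;>
      constructor <;> field_simp <;> (rw [mul_comm] at h34 h32 h21; field_simp; ring)
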